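/- Define on the bigraded space M_q^k = ⊕_{|I| = q−k} H^{2k−q}(D_I) the product μ(x ⊗ x') = 0 if I ∩ I' ≠ ∅ and μ(x ⊗ x') = (−1)^{(q−n)q'} sgn(I,I') · restriction of x times restriction of x' otherwise, where the grading of x ∈ H^{2n−q}(D_I) is (n,q). Then μ is graded-commutative: μ(x' ⊗ x) = (−1)^{n n'} μ(x ⊗ x'), assuming the cup products on each H^•(D_J) are graded-commutative and restrictions are ring homomorphisms. -/
import Mathlib


/-- The shuffle sign `sgn(I, I')` of two disjoint finite sets of naturals (as a
rational number): `(-1)` raised to the number of pairs `(i, i') ∈ I × I'` with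
`i' < i`, which is the sign of the permutation sorting the concatenation of the
increasing listings of `I` and `I'` into increasing order. -/
def shuffleSignQ (I I' : Finset ℕ) : ℚ :=
  (-1) ^ (∑ i ∈ I, (I'.filter (· < i)).card)

lemma shuffle_count (I I' : Finset ℕ) (h : Disjoint I I') :
    (∑ i ∈ I, (I'.filter (· < i)).card) + (∑ i' ∈ I', (I.filter (· < i')).card)
      = I.card * I'.card := by
  have hswap : (∑ i' ∈ I', (I.filter (· < i')).card)
      = ∑ i ∈ I, (I'.filter (i < ·)).card := by
    simp only [Finset.card_filter]
    rw [Finset.sum_comm]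
  rw [hswap, ← Finset.sum_add_distrib]
  have : ∀ i ∈ I, (I'.filter (· < i)).card + (I'.filter (i < ·)).card = I'.card := by
    intro i hi
    simp only [Finset.card_filter, ← Finset.sum_add_distrib]
    rw [Finset.sum_congr rfl (fun i' hi' => ?_), Finset.sum_const, smul_eq_mul, mul_one]
    have hne : i ≠ i' := fun he => (Finset.disjoint_left.mp h hi (he ▸ hi'))
    rcases lt_trichotomy i i' with h1 | h1 | h1 <;> simp [h1, hne, not_lt_of_gt, asymm] <;> omega
  rw [Finset.sum_congr rfl this, Finset.sum_const, smul_eq_mul]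

lemma shuffle_swap (I I' : Finset ℕ) (h : Disjoint I I') :
    shuffleSignQ I' I = (-1 : ℚ) ^ (I.card * I'.card) * shuffleSignQ I I' := by
  unfold shuffleSignQ
  rw [← shuffle_count I I' h, pow_add, mul_comm ((-1:ℚ) ^ _), mul_assoc, ← pow_add]
  simp [← two_mul, pow_mul]

theorem stmt_13
    (R : Finset ℕ → Type) [∀ I, Ring (R I)] [∀ I, Algebra ℚ (R I)]
    (G : ∀ I : Finset ℕ, ℤ → Submodule ℚ (R I))
    (hgradedcomm : ∀ (I : Finset ℕ) (m m' : ℤ), ∀ a ∈ G I m, ∀ b ∈ G I m',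
      a * b = ((-1 : ℚ) ^ (m * m')) • (b * a))
    (ρ : ∀ I J : Finset ℕ, I ⊆ J → (R I →ₐ[ℚ] R J))
    (hρgrading : ∀ (I J : Finset ℕ) (h : I ⊆ J) (m : ℤ), ∀ a ∈ G I m,
      ρ I J h a ∈ G J m)
    (I I' : Finset ℕ) (hdisj : Disjoint I I')
    (n q n' q' : ℤ)
    (hcard : (I.card : ℤ) = q - n) (hcard' : (I'.card : ℤ) = q' - n')
    (x : R I) (hx : x ∈ G I (2 * n - q))
    (x' : R I') (hx' : x' ∈ G I' (2 * n' - q')) :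
    ((-1 : ℚ) ^ ((q' - n') * q) * shuffleSignQ I' I) •
        (ρ I' (I ∪ I') Finset.subset_union_right x' *
          ρ I (I ∪ I') Finset.subset_union_left x)
      = ((-1 : ℚ) ^ (n * n')) •
        (((-1 : ℚ) ^ ((q - n) * q') * shuffleSignQ I I') •
          (ρ I (I ∪ I') Finset.subset_union_left x *
            ρ I' (I ∪ I') Finset.subset_union_right x')) := by
  set a := ρ I (I ∪ I') Finset.subset_union_left x with ha
  set b := ρ I' (I ∪ I') Finset.subset_union_right x' with hb
  have haG : a ∈ G (I ∪ I') (2 * n - q) :=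
    hρgrading I (I ∪ I') Finset.subset_union_left _ x hx
  have hbG : b ∈ G (I ∪ I') (2 * n' - q') :=
    hρgrading I' (I ∪ I') Finset.subset_union_right _ x' hx'
  have hcomm : b * a = ((-1 : ℚ) ^ ((2 * n' - q') * (2 * n - q))) • (a * b) :=
    hgradedcomm (I ∪ I') _ _ b hbG a haG
  -- shuffle sign swap with exponents as integers
  have hswap : shuffleSignQ I' I = (-1 : ℚ) ^ ((q - n) * (q' - n')) * shuffleSignQ I I' := by
    rw [shuffle_swap I I' hdisj]
    congr 1
    rw [← hcard, ← hcard']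
    rw [← zpow_natCast (-1 : ℚ) (I.card * I'.card)]
    push_cast
    ring_nf
  rw [hcomm, hswap, smul_smul, smul_smul]
  congr 1
  have hne : (-1 : ℚ) ≠ 0 := by norm_num
  have key : (-1 : ℚ) ^ ((q' - n') * q) * (-1 : ℚ) ^ ((q - n) * (q' - n'))
      * (-1 : ℚ) ^ ((2 * n' - q') * (2 * n - q))
      = (-1 : ℚ) ^ (n * n') * (-1 : ℚ) ^ ((q - n) * q') := by
    rw [← zpow_add₀ hne, ← zpow_add₀ hne, ← zpow_add₀ hne]
    have hexp : (q' - n') * q + (q - n) * (q' - n') + (2 * n' - q') * (2 * n - q)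
        = n * n' + (q - n) * q' + 2 * (q * q' - 2 * n' * q - n * q' + 2 * n * n') := by ring
    rw [hexp, zpow_add₀ hne, zpow_mul]
    norm_num
  calc (-1 : ℚ) ^ ((q' - n') * q) * ((-1 : ℚ) ^ ((q - n) * (q' - n')) * shuffleSignQ I I')
        * (-1 : ℚ) ^ ((2 * n' - q') * (2 * n - q))
      = ((-1 : ℚ) ^ ((q' - n') * q) * (-1 : ℚ) ^ ((q - n) * (q' - n'))
          * (-1 : ℚ) ^ ((2 * n' - q') * (2 * n - q))) * shuffleSignQ I I' := by ring
    _ = ((-1 : ℚ) ^ (n * n') * (-1 : ℚ) ^ ((q - n) * q')) * shuffleSignQ I I' := by rw [key]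
    _ = (-1 : ℚ) ^ (n * n') * ((-1 : ℚ) ^ ((q - n) * q') * shuffleSignQ I I') := by ring
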